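/- Let ρ : ℝ → (0,∞) and β_ij : ℝ → (0,1] for 1 ≤ i < j ≤ N satisfy the energy identity h/ρ(t)^V = ∏_{i<j} β_ij(t)^{Γ_iΓ_j} with h > 0, V = Σ_{i<j} Γ_iΓ_j > 0, and all Γ_i ≠ 0. If there is a sequence t_n → T with ρ(t_n) → 0, then there exist indices i < j with Γ_iΓ_j < 0 and a subsequence t_{n_k} with β_ij(t_{n_k}) → 0. -/

import Mathlib

open Filter

theorem stmt_18 (N : ℕ) (Γ : Fin N → ℝ) (hΓ : ∀ i, Γ i ≠ 0)
    (h : ℝ) (hh : 0 < h)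
    (V : ℝ)
    (hV : V = ∑ p ∈ Finset.univ.filter (fun p : Fin N × Fin N => p.1 < p.2),
      Γ p.1 * Γ p.2)
    (hVpos : 0 < V)
    (ρ : ℝ → ℝ) (hρ : ∀ t, 0 < ρ t)
    (β : Fin N → Fin N → ℝ → ℝ)
    (hβ : ∀ i j : Fin N, i < j → ∀ t : ℝ, β i j t ∈ Set.Ioc (0 : ℝ) 1)
    (hsum : ∀ t : ℝ,
      (∑ p ∈ Finset.univ.filter (fun p : Fin N × Fin N => p.1 < p.2), β p.1 p.2 t) = 1)
    (henergy : ∀ t : ℝ,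
      h / ρ t ^ V =
        ∏ p ∈ Finset.univ.filter (fun p : Fin N × Fin N => p.1 < p.2),
          β p.1 p.2 t ^ (Γ p.1 * Γ p.2))
    (t : ℕ → ℝ) (T : ℝ) (htT : Tendsto t atTop (nhds T))
    (hρ0 : Tendsto (fun n => ρ (t n)) atTop (nhds 0)) :
    ∃ i j : Fin N, i < j ∧ Γ i * Γ j < 0 ∧
      ∃ φ : ℕ → ℕ, StrictMono φ ∧
        Tendsto (fun k => β i j (t (φ k))) atTop (nhds 0) := by
  classical
  set S : Finset (Fin N × Fin N) :=
    Finset.univ.filter (fun p : Fin N × Fin N => p.1 < p.2) with hSdef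
  set f : Fin N × Fin N → ℕ → ℝ :=
    fun p n => β p.1 p.2 (t n) ^ (Γ p.1 * Γ p.2) with hfdef
  have hfpos : ∀ p ∈ S, ∀ n, 0 < f p n := by
    intro p hp n
    have hlt : p.1 < p.2 := (Finset.mem_filter.mp hp).2
    exact Real.rpow_pos_of_pos (hβ p.1 p.2 hlt (t n)).1 _
  -- h / ρ(t n)^V → ∞
  have hPtop : Tendsto (fun n => h / ρ (t n) ^ V) atTop atTop := by
    have h1 : Tendsto (fun n => ρ (t n) ^ V) atTop (nhds 0) := by
      have hc : ContinuousAt (fun x : ℝ => x ^ V) 0 :=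
        Real.continuousAt_rpow_const 0 V (Or.inr hVpos.le)
      have h2 := hc.tendsto.comp hρ0
      simpa [Function.comp_def, Real.zero_rpow hVpos.ne'] using h2
    have h2 : Tendsto (fun n => ρ (t n) ^ V) atTop (nhdsWithin 0 (Set.Ioi 0)) :=
      tendsto_nhdsWithin_of_tendsto_nhds_of_eventually_within _ h1
        (Eventually.of_forall fun n => Real.rpow_pos_of_pos (hρ (t n)) _)
    have h3 : Tendsto (fun n => (ρ (t n) ^ V)⁻¹) atTop atTop :=
      h2.inv_tendsto_nhdsGT_zero
    have h4 := h3.const_mul_atTop hh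
    simpa [div_eq_mul_inv] using h4
  -- some factor is frequently large
  have key : ∃ p ∈ S, ∀ M : ℝ, ∃ᶠ n in atTop, M < f p n := by
    by_contra hcon
    push_neg at hcon
    have hbd : ∀ p : Fin N × Fin N, ∃ M : ℝ, p ∈ S → ∀ᶠ n in atTop, f p n ≤ M := by
      intro p
      by_cases hp : p ∈ S
      · obtain ⟨M, hM⟩ := hcon p hp
        refine ⟨M, fun _ => ?_⟩
        exact hM
      · exact ⟨0, fun h' => absurd h' hp⟩
    choose M hM using hbd
    have hev : ∀ᶠ n in atTop, ∀ p ∈ S, f p n ≤ M p :=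
      (Filter.eventually_all_finset S).mpr (fun p hp => hM p hp)
    have hbound : ∀ᶠ n in atTop, h / ρ (t n) ^ V ≤ ∏ p ∈ S, max 1 (M p) := by
      filter_upwards [hev] with n hn
      rw [henergy (t n)]
      exact Finset.prod_le_prod (fun p hp => (hfpos p hp n).le)
        (fun p hp => (hn p hp).trans (le_max_right _ _))
    have hgt := hPtop.eventually_gt_atTop (∏ p ∈ S, max 1 (M p))
    obtain ⟨n, hn1, hn2⟩ := (hbound.and hgt).exists
    exact absurd hn1 (not_le.mpr hn2)
  obtain ⟨p, hpS, hfreq⟩ := key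
  have hlt : p.1 < p.2 := (Finset.mem_filter.mp hpS).2
  have hβm := fun n => hβ p.1 p.2 hlt (t n)
  -- extract subsequence
  obtain ⟨φ, hφmono, hφ⟩ :=
    Filter.extraction_forall_of_frequently (fun k : ℕ => hfreq (k : ℝ))
  have hftop : Tendsto (fun k => f p (φ k)) atTop atTop :=
    tendsto_atTop_mono (fun k => (hφ k).le) tendsto_natCast_atTop_atTop
  -- exponent is negative
  set e : ℝ := Γ p.1 * Γ p.2 with hedef
  have hene : e ≠ 0 := mul_ne_zero (hΓ p.1) (hΓ p.2)
  have heneg : e < 0 := by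
    rcases lt_or_ge e 0 with h' | h'
    · exact h'
    · exfalso
      have hle : ∀ n, f p n ≤ 1 := fun n =>
        Real.rpow_le_one (hβm n).1.le (hβm n).2 h'
      obtain ⟨k, hk⟩ := (hftop.eventually_gt_atTop 1).exists
      exact absurd (hle (φ k)) (not_le.mpr hk)
  refine ⟨p.1, p.2, hlt, heneg, φ, hφmono, ?_⟩
  have h0 : Tendsto (fun x : ℝ => x ^ (1 / e)) atTop (nhds 0) := by
    have h1 : (0 : ℝ) < -(1 / e) := neg_pos.mpr (one_div_neg.mpr heneg)
    have := tendsto_rpow_neg_atTop h1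
    simpa using this
  have hcomp := h0.comp hftop
  refine hcomp.congr fun k => ?_
  show f p (φ k) ^ (1 / e) = β p.1 p.2 (t (φ k))
  show (β p.1 p.2 (t (φ k)) ^ e) ^ (1 / e) = β p.1 p.2 (t (φ k))
  rw [← Real.rpow_mul (hβm (φ k)).1.le, mul_one_div_cancel hene, Real.rpow_one]
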